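/- For every real α > 0, one has ∫_0^∞ erfc(α·(w + w^{−1})) dw/w = Γ(0, 4α²), the integral converging absolutely, where Γ(0,x) := ∫_x^∞ e^{−t}·t^{−1} dt. -/

import Mathlib

open MeasureTheory Filter Set

noncomputable section

/-- The complementary error function `erfc(x) = (2/√π)∫_x^∞ e^{-r²} dr`. -/
def erfc (x : ℝ) : ℝ := (2 / Real.sqrt Real.pi) * ∫ r in Set.Ioi x, Real.exp (-(r ^ 2))

/-- The incomplete Gamma function at `s = 0`: `Γ(0,x) = ∫_x^∞ e^{-t}·t⁻¹ dt`. -/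
def Gamma0 (x : ℝ) : ℝ := ∫ t in Set.Ioi x, Real.exp (-t) / t


def Etail (a : ℝ) : ℝ := ∫ ρ in Set.Ioi a, Real.exp (-(ρ ^ 2))

lemma gauss_integrable : Integrable (fun ρ : ℝ => Real.exp (-(ρ ^ 2))) := by
  simpa using integrable_exp_neg_mul_sq (b := 1) one_pos

lemma xgauss_integrable : Integrable (fun x : ℝ => x * Real.exp (-(x ^ 2))) := by
  have h := integrable_mul_exp_neg_mul_sq (b := 1) one_pos
  simpa [neg_mul, one_mul] using h

lemma Etail_nonneg (a : ℝ) : 0 ≤ Etail a :=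
  setIntegral_nonneg measurableSet_Ioi fun x _ => (Real.exp_pos _).le

lemma Etail_eq (a : ℝ) : Etail a = Etail 0 - ∫ t in (0:ℝ)..a, Real.exp (-(t ^ 2)) := by
  rcases le_or_gt 0 a with h | h
  · have hu : Ioc (0:ℝ) a ∪ Ioi a = Ioi 0 := Ioc_union_Ioi_eq_Ioi h
    have := setIntegral_union (s := Ioc (0:ℝ) a) (t := Ioi a)
      (f := fun ρ : ℝ => Real.exp (-(ρ ^ 2))) (μ := volume) (Ioc_disjoint_Ioi le_rfl)
      measurableSet_Ioi gauss_integrable.integrableOn gauss_integrable.integrableOn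
    rw [hu] at this
    rw [intervalIntegral.integral_of_le h]
    simp only [Etail] at this ⊢
    rw [this]; ring
  · have hu : Ioc a (0:ℝ) ∪ Ioi 0 = Ioi a := Ioc_union_Ioi_eq_Ioi h.le
    have := setIntegral_union (s := Ioc a (0:ℝ)) (t := Ioi 0)
      (f := fun ρ : ℝ => Real.exp (-(ρ ^ 2))) (μ := volume) (Ioc_disjoint_Ioi le_rfl)
      measurableSet_Ioi gauss_integrable.integrableOn gauss_integrable.integrableOn
    rw [hu] at this
    rw [intervalIntegral.integral_symm, intervalIntegral.integral_of_le h.le]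
    simp only [Etail] at this ⊢
    rw [this]; ring

lemma Etail_continuous : Continuous Etail := by
  have h : Continuous fun a : ℝ => Etail 0 - ∫ t in (0:ℝ)..a, Real.exp (-(t ^ 2)) :=
    (continuous_const.sub
      (intervalIntegral.continuous_primitive (fun a b => gauss_integrable.intervalIntegrable) 0))
  exact (funext Etail_eq : Etail = _) ▸ h

lemma integral_rho_gauss (c : ℝ) : ∫ ρ in Set.Ioi c, ρ * Real.exp (-(ρ ^ 2))
    = Real.exp (-(c ^ 2)) / 2 := by
  have hderiv : ∀ x ∈ Ioi c, HasDerivAt (fun ρ : ℝ => -Real.exp (-(ρ ^ 2)) / 2)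
      (x * Real.exp (-(x ^ 2))) x := by
    intro x _
    have h1 : HasDerivAt (fun ρ : ℝ => -(ρ ^ 2)) (-(2 * x)) x := by
      simpa using ((hasDerivAt_pow 2 x).fun_neg)
    have h2 := (Real.hasDerivAt_exp _).comp x h1
    have h3 : HasDerivAt (fun ρ : ℝ => -Real.exp (-(ρ ^ 2)) / 2)
        (-(Real.exp (-(x ^ 2)) * -(2 * x)) / 2) x := (h2.fun_neg.div_const 2)
    convert h3 using 1; ring
  have hint : IntegrableOn (fun x : ℝ => x * Real.exp (-(x ^ 2))) (Ioi c) :=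
    xgauss_integrable.integrableOn
  have hcont : ContinuousWithinAt (fun ρ : ℝ => -Real.exp (-(ρ ^ 2)) / 2) (Ici c) c := by
    apply Continuous.continuousWithinAt
    continuity
  have htend : Tendsto (fun ρ : ℝ => -Real.exp (-(ρ ^ 2)) / 2) atTop (nhds 0) := by
    have : Tendsto (fun ρ : ℝ => -(ρ ^ 2)) atTop atBot := by
      apply tendsto_neg_atBot_iff.mpr
      exact tendsto_pow_atTop (by norm_num)
    have := (Real.tendsto_exp_atBot.comp this).neg.div_const 2
    simpa using this
  have := integral_Ioi_of_hasDerivAt_of_tendsto hcont hderiv hint htend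
  rw [this]; ring

lemma Etail_le {c : ℝ} (hc : 0 < c) : Etail c ≤ Real.exp (-(c ^ 2)) / (2 * c) := by
  have h1 : Etail c ≤ ∫ ρ in Set.Ioi c, (ρ / c) * Real.exp (-(ρ ^ 2)) := by
    apply setIntegral_mono_on gauss_integrable.integrableOn _ measurableSet_Ioi
    · intro x hx
      have hx1 : 1 ≤ x / c := (one_le_div hc).mpr (le_of_lt hx)
      nlinarith [Real.exp_pos (-(x ^ 2)), hx1]
    · have h2 : Integrable (fun x : ℝ => c⁻¹ * (x * Real.exp (-(x ^ 2)))) :=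
        xgauss_integrable.const_mul c⁻¹
      apply h2.integrableOn.congr_fun _ measurableSet_Ioi
      intro x _; field_simp
  calc Etail c ≤ ∫ ρ in Set.Ioi c, (ρ / c) * Real.exp (-(ρ ^ 2)) := h1
    _ = c⁻¹ * ∫ ρ in Set.Ioi c, ρ * Real.exp (-(ρ ^ 2)) := by
        rw [← integral_const_mul]
        congr 1; funext x; ring
    _ = Real.exp (-(c ^ 2)) / (2 * c) := by
        rw [integral_rho_gauss]; field_simp

lemma sq_le_sinh_sq (s : ℝ) : s ^ 2 ≤ Real.sinh s ^ 2 := by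
  rcases le_or_gt 0 s with h | h
  · have h1 : s ≤ Real.sinh s := Real.self_le_sinh_iff.mpr h
    nlinarith
  · have h1 : Real.sinh s ≤ s := by
      have h2 : -s ≤ Real.sinh (-s) := Real.self_le_sinh_iff.mpr (by linarith)
      rw [Real.sinh_neg] at h2; linarith
    nlinarith

lemma Etail_cosh_integrable {α : ℝ} (hα : 0 < α) :
    Integrable (fun s : ℝ => Etail (2 * α * Real.cosh s)) := by
  have hmeas : AEStronglyMeasurable (fun s : ℝ => Etail (2 * α * Real.cosh s)) volume :=
    (Etail_continuous.comp (continuous_const.mul Real.continuous_cosh)).aestronglyMeasurable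
  have hB : Integrable (fun s : ℝ => (1 / (4 * α)) * Real.exp (-(4 * α ^ 2) * s ^ 2)) :=
    (integrable_exp_neg_mul_sq (by positivity)).const_mul _
  apply hB.mono' hmeas
  filter_upwards with s
  have hc : 0 < 2 * α * Real.cosh s := by
    have := Real.cosh_pos s; positivity
  have h1 : Etail (2 * α * Real.cosh s) ≤ Real.exp (-((2 * α * Real.cosh s) ^ 2)) / (2 * (2 * α * Real.cosh s)) :=
    Etail_le hc
  have hcosh1 : 1 ≤ Real.cosh s := Real.one_le_cosh s
  have hsq : s ^ 2 ≤ Real.cosh s ^ 2 := by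
    have := sq_le_sinh_sq s
    have := Real.cosh_sq s
    nlinarith
  have hexp : Real.exp (-((2 * α * Real.cosh s) ^ 2)) ≤ Real.exp (-(4 * α ^ 2) * s ^ 2) := by
    apply Real.exp_le_exp.mpr
    nlinarith
  have hden : 4 * α ≤ 2 * (2 * α * Real.cosh s) := by nlinarith
  rw [Real.norm_eq_abs, abs_of_nonneg (Etail_nonneg _)]
  calc Etail (2 * α * Real.cosh s)
      ≤ Real.exp (-((2 * α * Real.cosh s) ^ 2)) / (2 * (2 * α * Real.cosh s)) := h1
    _ ≤ Real.exp (-(4 * α ^ 2) * s ^ 2) / (4 * α) := by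
        apply div_le_div₀ (Real.exp_pos _).le hexp (by positivity) hden
    _ = (1 / (4 * α)) * Real.exp (-(4 * α ^ 2) * s ^ 2) := by ring

lemma Etail_scale {α : ℝ} (hα : 0 < α) (s : ℝ) :
    Etail (2 * α * Real.cosh s)
      = Real.cosh s * ∫ r in Set.Ioi (2 * α), Real.exp (-((Real.cosh s * r) ^ 2)) := by
  have h := integral_comp_mul_left_Ioi (g := fun ρ : ℝ => Real.exp (-(ρ ^ 2))) (2 * α)
    (Real.cosh_pos s)
  rw [h, smul_eq_mul, ← mul_assoc, mul_inv_cancel₀ (Real.cosh_pos s).ne', one_mul]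
  simp only [Etail]
  congr 1
  ring

lemma inner_eval {r : ℝ} (hr : 0 < r) :
    ∫ s : ℝ, Real.cosh s * Real.exp (-((Real.cosh s * r) ^ 2))
      = Real.exp (-(r ^ 2)) * (Real.sqrt Real.pi / r) := by
  have hrw : ∀ s : ℝ, Real.cosh s * Real.exp (-((Real.cosh s * r) ^ 2))
      = Real.exp (-(r ^ 2)) * (Real.cosh s * Real.exp (-(r ^ 2) * Real.sinh s ^ 2)) := by
    intro s
    have harg : -((Real.cosh s * r) ^ 2) = -(r ^ 2) + -(r ^ 2) * Real.sinh s ^ 2 := by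
      rw [mul_pow, Real.cosh_sq]; ring
    rw [harg, Real.exp_add]; ring
  rw [show (fun s : ℝ => Real.cosh s * Real.exp (-((Real.cosh s * r) ^ 2)))
      = fun s : ℝ => Real.exp (-(r ^ 2)) * (Real.cosh s * Real.exp (-(r ^ 2) * Real.sinh s ^ 2))
    from funext hrw, integral_const_mul]
  congr 1
  have himg : Real.sinh '' univ = (univ : Set ℝ) := by
    rw [image_univ, Real.sinh_surjective.range_eq]
  have h := integral_image_eq_integral_abs_deriv_smul (f := Real.sinh)
    (f' := Real.cosh) MeasurableSet.univ
    (fun x _ => (Real.hasDerivAt_sinh x).hasDerivWithinAt)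
    Real.sinh_injective.injOn (fun u : ℝ => Real.exp (-(r ^ 2) * u ^ 2))
  rw [himg] at h
  rw [setIntegral_univ] at h
  rw [setIntegral_univ] at h
  have hg : ∫ u : ℝ, Real.exp (-(r ^ 2) * u ^ 2) = Real.sqrt Real.pi / r := by
    rw [integral_gaussian, Real.sqrt_div Real.pi_pos.le, Real.sqrt_sq hr.le]
  rw [← hg, h]
  congr 1
  funext x
  rw [smul_eq_mul, abs_of_pos (Real.cosh_pos x)]

lemma sq_image_Ioi {α : ℝ} (hα : 0 < α) :
    (fun r : ℝ => r ^ 2) '' Set.Ioi (2 * α) = Set.Ioi (4 * α ^ 2) := by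
  ext t
  constructor
  · rintro ⟨r, hr, rfl⟩
    have hr' : 2 * α < r := hr
    simp only [mem_Ioi]
    nlinarith
  · intro ht
    have ht' : 4 * α ^ 2 < t := ht
    have htpos : 0 < t := by nlinarith
    refine ⟨Real.sqrt t, ?_, Real.sq_sqrt htpos.le⟩
    have : 2 * α < Real.sqrt t := (Real.lt_sqrt (by positivity)).mpr (by nlinarith)
    exact this

lemma gamma0_eq {α : ℝ} (hα : 0 < α) :
    Gamma0 (4 * α ^ 2) = ∫ r in Set.Ioi (2 * α), 2 * Real.exp (-(r ^ 2)) / r := by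
  have h := integral_image_eq_integral_abs_deriv_smul (f := fun r : ℝ => r ^ 2)
    (f' := fun r : ℝ => 2 * r) measurableSet_Ioi
    (fun x _ => by simpa using (hasDerivAt_pow 2 x).hasDerivWithinAt)
    (fun x hx y hy hxy => by
      have hx' : 2 * α < x := hx
      have hy' : 2 * α < y := hy
      dsimp at hxy
      nlinarith)
    (fun t : ℝ => Real.exp (-t) / t)
  rw [sq_image_Ioi hα] at h
  rw [Gamma0, h]
  apply setIntegral_congr_fun measurableSet_Ioi
  intro r hr
  have hr' : 0 < r := lt_trans (by positivity) hr
  simp only [smul_eq_mul]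
  rw [abs_of_pos (by positivity : (0:ℝ) < 2 * r)]
  field_simp

lemma slice_int {α : ℝ} (s : ℝ) :
    Integrable (fun r : ℝ => Real.cosh s * Real.exp (-((Real.cosh s * r) ^ 2)))
      (volume.restrict (Set.Ioi (2 * α))) := by
  have h0 : Integrable (fun r : ℝ => Real.exp (-(Real.cosh s ^ 2) * r ^ 2)) :=
    integrable_exp_neg_mul_sq (by have := Real.cosh_pos s; positivity)
  have h1 := (h0.const_mul (Real.cosh s)).restrict (s := Set.Ioi (2 * α))
  apply h1.congr
  filter_upwards with r
  rw [mul_pow, neg_mul]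

lemma fubini_int {α : ℝ} (hα : 0 < α) :
    Integrable (fun p : ℝ × ℝ => Real.cosh p.1 * Real.exp (-((Real.cosh p.1 * p.2) ^ 2)))
      (volume.prod (volume.restrict (Set.Ioi (2 * α)))) := by
  refine (integrable_prod_iff ?_).mpr ⟨?_, ?_⟩
  · apply Continuous.aestronglyMeasurable
    fun_prop
  · exact Eventually.of_forall fun s => slice_int s
  · apply (Etail_cosh_integrable hα).congr
    filter_upwards with s
    rw [Etail_scale hα s, ← integral_const_mul]
    apply setIntegral_congr_fun measurableSet_Ioi
    intro r _
    have : (0:ℝ) ≤ Real.cosh s * Real.exp (-((Real.cosh s * r) ^ 2)) := by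
      have := (Real.cosh_pos s).le
      positivity
    dsimp only
    rw [Real.norm_of_nonneg this]

/-- `∫_0^∞ erfc(α(w+w⁻¹)) dw/w = Γ(0,4α²)` for `α > 0`, the integral
converging absolutely. -/
theorem stmt10 (α : ℝ) (hα : 0 < α) :
    IntegrableOn (fun w : ℝ => erfc (α * (w + w⁻¹)) / w) (Set.Ioi 0) ∧
    (∫ w in Set.Ioi (0 : ℝ), erfc (α * (w + w⁻¹)) / w) = Gamma0 (4 * α ^ 2) := by
  have hderivE : ∀ x ∈ (univ : Set ℝ), HasDerivWithinAt Real.exp (Real.exp x) univ x :=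
    fun x _ => (Real.hasDerivAt_exp x).hasDerivWithinAt
  have hinjE : InjOn Real.exp univ := Real.exp_injective.injOn
  have himgE : Real.exp '' univ = Set.Ioi (0 : ℝ) := by rw [image_univ, Real.range_exp]
  have hkey : ∀ s : ℝ, |Real.exp s| • (erfc (α * (Real.exp s + (Real.exp s)⁻¹)) / Real.exp s)
      = (2 / Real.sqrt Real.pi) * Etail (2 * α * Real.cosh s) := by
    intro s
    rw [abs_of_pos (Real.exp_pos s), smul_eq_mul]
    have harg : α * (Real.exp s + (Real.exp s)⁻¹) = 2 * α * Real.cosh s := by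
      rw [← Real.exp_neg, Real.cosh_eq]; ring
    rw [harg, mul_comm, div_mul_cancel₀ _ (Real.exp_pos s).ne']
    rfl
  constructor
  · have hIntIff := integrableOn_image_iff_integrableOn_abs_deriv_smul (f := Real.exp)
      (f' := Real.exp) MeasurableSet.univ hderivE hinjE
      (fun w : ℝ => erfc (α * (w + w⁻¹)) / w)
    rw [himgE] at hIntIff
    rw [hIntIff, IntegrableOn, Measure.restrict_univ]
    have hint2 : Integrable (fun s : ℝ => (2 / Real.sqrt Real.pi) * Etail (2 * α * Real.cosh s)) :=
      (Etail_cosh_integrable hα).const_mul _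
    exact hint2.congr (Eventually.of_forall fun s => (hkey s).symm)
  · have hval := integral_image_eq_integral_abs_deriv_smul (f := Real.exp)
      (f' := Real.exp) MeasurableSet.univ hderivE hinjE
      (fun w : ℝ => erfc (α * (w + w⁻¹)) / w)
    rw [himgE, setIntegral_univ] at hval
    rw [hval]
    have hsqrtpi : Real.sqrt Real.pi ≠ 0 := ne_of_gt (Real.sqrt_pos.mpr Real.pi_pos)
    calc ∫ s : ℝ, |Real.exp s| • (erfc (α * (Real.exp s + (Real.exp s)⁻¹)) / Real.exp s)
        = ∫ s : ℝ, (2 / Real.sqrt Real.pi) * Etail (2 * α * Real.cosh s) :=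
          integral_congr_ae (Eventually.of_forall hkey)
      _ = (2 / Real.sqrt Real.pi) * ∫ s : ℝ, Etail (2 * α * Real.cosh s) :=
          integral_const_mul _ _
      _ = (2 / Real.sqrt Real.pi) * ∫ s : ℝ, ∫ r in Set.Ioi (2 * α),
            Real.cosh s * Real.exp (-((Real.cosh s * r) ^ 2)) := by
          congr 1
          apply integral_congr_ae (Eventually.of_forall fun s => ?_)
          rw [Etail_scale hα s, ← integral_const_mul]
      _ = (2 / Real.sqrt Real.pi) * ∫ r in Set.Ioi (2 * α), ∫ s : ℝ,
            Real.cosh s * Real.exp (-((Real.cosh s * r) ^ 2)) := by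
          rw [integral_integral_swap (fubini_int hα)]
      _ = (2 / Real.sqrt Real.pi) * ∫ r in Set.Ioi (2 * α),
            Real.exp (-(r ^ 2)) * (Real.sqrt Real.pi / r) := by
          congr 1
          apply setIntegral_congr_fun measurableSet_Ioi
          intro r hr
          exact inner_eval (lt_trans (by positivity) hr)
      _ = ∫ r in Set.Ioi (2 * α), 2 * Real.exp (-(r ^ 2)) / r := by
          rw [← integral_const_mul]
          apply setIntegral_congr_fun measurableSet_Ioi
          intro r hr
          have hr' : 0 < r := lt_trans (by positivity) hr
          field_simp
      _ = Gamma0 (4 * α ^ 2) := (gamma0_eq hα).symm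


end
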